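/- If P is an n×n doubly stochastic matrix and x a probability vector, then G(xP) ≤ G(x), where G is the Gini index. -/
import Mathlib


theorem gini_mul_doublyStochastic_le {n : ℕ} (x : Fin n → ℝ) (P : Matrix (Fin n) (Fin n) ℝ)
    (hx0 : ∀ a, 0 ≤ x a) (hx1 : ∑ a, x a = 1)
    (hP0 : ∀ a b, 0 ≤ P a b) (hPr : ∀ a, ∑ b, P a b = 1) (hPc : ∀ b, ∑ a, P a b = 1) :
    (1 / (2 * ((n : ℝ) + 1))) * ∑ a, ∑ b, |(∑ c, x c * P c a) - (∑ c, x c * P c b)|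
      ≤ (1 / (2 * ((n : ℝ) + 1))) * ∑ a, ∑ b, |x a - x b| := by
  apply mul_le_mul_of_nonneg_left _ (by positivity)
  have key : ∀ a b : Fin n, |(∑ c, x c * P c a) - (∑ c, x c * P c b)|
      ≤ ∑ c, ∑ d, P c a * P d b * |x c - x d| := by
    intro a b
    have h1 : (∑ c, x c * P c a) - (∑ c, x c * P c b)
        = ∑ c, ∑ d, P c a * P d b * (x c - x d) := by
      have e1 : (∑ c, x c * P c a) = ∑ c, ∑ d, P c a * P d b * x c := by
        refine Finset.sum_congr rfl fun c _ => ?_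
        rw [← Finset.sum_mul, ← Finset.mul_sum, hPc b, mul_one]
        ring
      have e2 : (∑ c, x c * P c b) = ∑ c, ∑ d, P c a * P d b * x d := by
        rw [Finset.sum_comm]
        refine Finset.sum_congr rfl fun d _ => ?_
        rw [← Finset.sum_mul]
        have : ∑ c, P c a * P d b = P d b := by
          rw [← Finset.sum_mul, hPc a, one_mul]
        rw [this]; ring
      rw [e1, e2, ← Finset.sum_sub_distrib]
      refine Finset.sum_congr rfl fun c _ => ?_
      rw [← Finset.sum_sub_distrib]
      refine Finset.sum_congr rfl fun d _ => ?_
      ring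
    rw [h1]
    calc |∑ c, ∑ d, P c a * P d b * (x c - x d)|
        ≤ ∑ c, |∑ d, P c a * P d b * (x c - x d)| := Finset.abs_sum_le_sum_abs _ _
      _ ≤ ∑ c, ∑ d, P c a * P d b * |x c - x d| := by
          refine Finset.sum_le_sum fun c _ => ?_
          calc |∑ d, P c a * P d b * (x c - x d)|
              ≤ ∑ d, |P c a * P d b * (x c - x d)| := Finset.abs_sum_le_sum_abs _ _
            _ = ∑ d, P c a * P d b * |x c - x d| := by
                refine Finset.sum_congr rfl fun d _ => ?_
                rw [abs_mul, abs_of_nonneg (mul_nonneg (hP0 c a) (hP0 d b))]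
  calc (∑ a, ∑ b, |(∑ c, x c * P c a) - (∑ c, x c * P c b)|)
      ≤ ∑ a, ∑ b, ∑ c, ∑ d, P c a * P d b * |x c - x d| := by
        refine Finset.sum_le_sum fun a _ => Finset.sum_le_sum fun b _ => key a b
    _ = ∑ b : Fin n, ∑ c, ∑ d, ∑ a, P c a * P d b * |x c - x d| := by
        rw [Finset.sum_comm]
        refine Finset.sum_congr rfl fun b _ => ?_
        rw [Finset.sum_comm]
        refine Finset.sum_congr rfl fun c _ => ?_
        rw [Finset.sum_comm]
    _ = ∑ b : Fin n, ∑ c, ∑ d, P d b * |x c - x d| := by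
        refine Finset.sum_congr rfl fun b _ => Finset.sum_congr rfl fun c _ =>
          Finset.sum_congr rfl fun d _ => ?_
        rw [← Finset.sum_mul, ← Finset.sum_mul, hPr c, one_mul]
    _ = ∑ c, ∑ d, ∑ b, P d b * |x c - x d| := by
        rw [Finset.sum_comm]
        refine Finset.sum_congr rfl fun c _ => ?_
        rw [Finset.sum_comm]
    _ = ∑ c, ∑ d, |x c - x d| := by
        refine Finset.sum_congr rfl fun c _ => Finset.sum_congr rfl fun d _ => ?_
        rw [← Finset.sum_mul, hPr d, one_mul]
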